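/- arXiv:1403.0428 — 2 statements merged into one kernel-verified Lean document; each statement's English description precedes it below -/
import Mathlib

section
/- Let 1 < p < ∞, let s ≥ 0, γ > 0 be real numbers, and let Λ ∈ ℝ. Let t₀ ≥ 0 be the unique solution of (s² + t²)^{(p-2)/2} t = |Λ|/γ, and set w = t₀ · sign(Λ). Then γ (s² + w²)^{(p-2)/2} w = Λ. -/
open Real

theorem recover_normal_derivative (p s γ Λ t₀ : ℝ) (hp1 : 1 < p)
    (hs : 0 ≤ s) (hγ : 0 < γ) (ht₀ : 0 ≤ t₀)
    (heq : (s ^ 2 + t₀ ^ 2) ^ ((p - 2) / 2) * t₀ = |Λ| / γ) :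
    γ * (s ^ 2 + (t₀ * Real.sign Λ) ^ 2) ^ ((p - 2) / 2) * (t₀ * Real.sign Λ) = Λ := by
  rcases lt_trichotomy Λ 0 with h | h | h
  · rw [Real.sign_of_neg h]
    have habs : |Λ| = -Λ := abs_of_neg h
    have : (t₀ * (-1 : ℝ)) ^ 2 = t₀ ^ 2 := by ring
    rw [this]
    have := heq
    rw [habs] at this
    field_simp at this ⊢
    nlinarith [this]
  · simp [h, Real.sign_zero]
  · rw [Real.sign_of_pos h]
    have habs : |Λ| = Λ := abs_of_pos h
    rw [habs] at heq
    have : (t₀ * (1 : ℝ)) ^ 2 = t₀ ^ 2 := by ring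
    rw [this]
    field_simp at heq ⊢
    nlinarith [heq]
end

section
/- Let 1 < p < ∞ and let a : ℝ → ℝ be a nontrivial solution of a'' + V(a,a') a = 0 where V(a,a') = ((2p−3)(a')² + (p−1)a²)/((p−1)(a')² + a²). Then the function h : ℝ^d → ℝ defined by h(x) = e^{−x_d} a(x₁) satisfies the p-Laplace equation div(|∇h|^{p−2} ∇h) = 0 pointwise at every point where ∇h ≠ 0. -/
open Real

lemma second_deriv_hasDerivAt (a : ℝ → ℝ) (ha : ContDiff ℝ 2 a) (t : ℝ) :
    HasDerivAt (deriv a) (deriv (deriv a) t) t := by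
  have h2 : ContDiff ℝ (1 + 1) a := by norm_num; exact ha
  have h1 : ContDiff ℝ 1 (deriv a) := (contDiff_succ_iff_deriv.mp h2).2.2
  exact ((h1.differentiable one_ne_zero) t).hasDerivAt

lemma aux_hasDerivAt (p : ℝ) (a : ℝ → ℝ) (ha : ContDiff ℝ 2 a) (t : ℝ)
    (hs : (deriv a t) ^ 2 + (a t) ^ 2 ≠ 0) (b : ℝ → ℝ) (b' : ℝ) (hb : HasDerivAt b b' t) :
    HasDerivAt (fun u => ((deriv a u) ^ 2 + (a u) ^ 2) ^ ((p - 2) / 2) * b u)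
      (((2 * deriv a t ^ 1 * deriv (deriv a) t + 2 * a t ^ 1 * deriv a t) * ((p - 2) / 2)
          * ((deriv a t) ^ 2 + (a t) ^ 2) ^ ((p - 2) / 2 - 1)) * b t
        + ((deriv a t) ^ 2 + (a t) ^ 2) ^ ((p - 2) / 2) * b') t := by
  have hda := second_deriv_hasDerivAt a ha t
  have haa : HasDerivAt a (deriv a t) t := ((ha.differentiable (by norm_num)) t).hasDerivAt
  have hsd : HasDerivAt (fun u => (deriv a u) ^ 2 + (a u) ^ 2)
      (2 * deriv a t ^ 1 * deriv (deriv a) t + 2 * a t ^ 1 * deriv a t) t :=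
    (hda.pow 2).add (haa.pow 2)
  exact (hsd.rpow_const (Or.inl hs)).mul hb

lemma key_hasDerivAt (p : ℝ) (hp1 : 1 < p) (a : ℝ → ℝ) (ha : ContDiff ℝ 2 a)
    (hODE : ∀ x : ℝ,
      deriv (deriv a) x
        + (((2 * p - 3) * (deriv a x) ^ 2 + (p - 1) * (a x) ^ 2)
            / ((p - 1) * (deriv a x) ^ 2 + (a x) ^ 2)) * a x = 0)
    (t : ℝ) (hs : (deriv a t) ^ 2 + (a t) ^ 2 ≠ 0) :
    HasDerivAt (fun u => ((deriv a u) ^ 2 + (a u) ^ 2) ^ ((p - 2) / 2) * deriv a u)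
      (-((p - 1) * (((deriv a t) ^ 2 + (a t) ^ 2) ^ ((p - 2) / 2) * a t))) t := by
  have h := aux_hasDerivAt p a ha t hs (deriv a) (deriv (deriv a) t)
    (second_deriv_hasDerivAt a ha t)
  convert h using 1
  set A := a t with hA
  set B := deriv a t with hB
  set C := deriv (deriv a) t with hC
  have hs0 : 0 < B ^ 2 + A ^ 2 := lt_of_le_of_ne (by positivity) (Ne.symm hs)
  have h1 : 0 ≤ (p - 1) * B ^ 2 := mul_nonneg (by linarith) (sq_nonneg B)
  have hD : (p - 1) * B ^ 2 + A ^ 2 ≠ 0 := by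
    intro h
    have hA2 : A ^ 2 = 0 := by linarith [sq_nonneg A]
    have hpB : (p - 1) * B ^ 2 = 0 := by linarith [sq_nonneg A]
    have hB2 : B ^ 2 = 0 := (mul_eq_zero.mp hpB).resolve_left (by intro h'; linarith)
    exact hs (by linarith)
  have hode := hODE t
  rw [← hA, ← hB, ← hC] at hode
  have hCD : C * ((p - 1) * B ^ 2 + A ^ 2) + ((2 * p - 3) * B ^ 2 + (p - 1) * A ^ 2) * A = 0 := by
    rw [div_mul_eq_mul_div, add_div_eq_mul_add_div _ _ hD, div_eq_zero_iff] at hode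
    exact hode.resolve_right hD
    
  have hsplit : (B ^ 2 + A ^ 2) ^ ((p - 2) / 2)
      = (B ^ 2 + A ^ 2) ^ ((p - 2) / 2 - 1) * (B ^ 2 + A ^ 2) := by
    rw [Real.rpow_sub hs0, Real.rpow_one]
    field_simp
  rw [hsplit]
  linear_combination (-(B ^ 2 + A ^ 2) ^ ((p - 2) / 2 - 1)) * hCD

lemma proj_hasFDerivAt {d : ℕ} (j : Fin d) (x : EuclideanSpace ℝ (Fin d)) :
    HasFDerivAt (𝕜 := ℝ) (fun y : EuclideanSpace ℝ (Fin d) => y j) (EuclideanSpace.proj j) x :=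
  (EuclideanSpace.proj (𝕜 := ℝ) j).hasFDerivAt

lemma gv_grad {d : ℕ} (i0 idl : Fin d) (a : ℝ → ℝ) (ha : ContDiff ℝ 2 a)
    (x : EuclideanSpace ℝ (Fin d)) :
    HasGradientAt (fun y : EuclideanSpace ℝ (Fin d) => Real.exp (-(y idl)) * a (y i0))
      ((Real.exp (-(x idl)) * deriv a (x i0)) • EuclideanSpace.single i0 (1:ℝ)
        - (Real.exp (-(x idl)) * a (x i0)) • EuclideanSpace.single idl (1:ℝ)) x := by
  have hexp : HasDerivAt (fun t : ℝ => Real.exp (-t)) (-Real.exp (-(x idl))) (x idl) := by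
    have h := (Real.hasDerivAt_exp (-(x idl))).comp (x idl) (hasDerivAt_neg (x idl))
    simpa [Function.comp_def] using h
  have h2 : HasFDerivAt (𝕜 := ℝ) (fun y : EuclideanSpace ℝ (Fin d) => Real.exp (-(y idl)))
      ((-Real.exp (-(x idl))) • EuclideanSpace.proj idl) x := by
    simpa [Function.comp_def] using hexp.comp_hasFDerivAt x (proj_hasFDerivAt idl x)
  have hat : HasDerivAt a (deriv a (x i0)) (x i0) := ((ha.differentiable (by norm_num)) (x i0)).hasDerivAt
  have h3 : HasFDerivAt (𝕜 := ℝ) (fun y : EuclideanSpace ℝ (Fin d) => a (y i0))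
      ((deriv a (x i0)) • EuclideanSpace.proj i0) x := by
    simpa [Function.comp_def] using hat.comp_hasFDerivAt x (proj_hasFDerivAt i0 x)
  have h4 := h2.mul h3
  rw [hasGradientAt_iff_hasFDerivAt]
  convert h4 using 1
  · rfl
  · rfl
  apply ContinuousLinearMap.ext
  intro v
  simp [InnerProductSpace.toDual_apply_apply, inner_sub_left, real_inner_smul_left,
    EuclideanSpace.inner_single_left]
  ring

lemma gv_norm {d : ℕ} (i0 idl : Fin d) (hne : i0 ≠ idl) (c1 c2 : ℝ) :
    ‖(c1 • EuclideanSpace.single i0 (1:ℝ) - c2 • EuclideanSpace.single idl (1:ℝ) :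
        EuclideanSpace ℝ (Fin d))‖ = Real.sqrt (c1 ^ 2 + c2 ^ 2) := by
  rw [norm_eq_sqrt_real_inner]
  congr 1
  simp [inner_sub_left, inner_sub_right, real_inner_smul_left, real_inner_smul_right,
    EuclideanSpace.inner_single_left, EuclideanSpace.single_apply, hne, Ne.symm hne,
    -inner_self_eq_norm_sq_to_K]
  ring

lemma gv_apply {d : ℕ} (i0 idl j : Fin d) (c1 c2 : ℝ) :
    (c1 • EuclideanSpace.single i0 (1:ℝ) - c2 • EuclideanSpace.single idl (1:ℝ) :
        EuclideanSpace ℝ (Fin d)) j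
      = (if j = i0 then c1 else 0) - (if j = idl then c2 else 0) := by
  simp [EuclideanSpace.single_apply]

theorem main_aux (d : ℕ) (p : ℝ) (hp1 : 1 < p)
    (a : ℝ → ℝ) (ha : ContDiff ℝ 2 a)
    (hODE : ∀ x : ℝ,
      deriv (deriv a) x
        + (((2 * p - 3) * (deriv a x) ^ 2 + (p - 1) * (a x) ^ 2)
            / ((p - 1) * (deriv a x) ^ 2 + (a x) ^ 2)) * a x = 0)
    (i0 idl : Fin d) (hne : i0 ≠ idl) (x : EuclideanSpace ℝ (Fin d))
    (hx : gradient (fun y : EuclideanSpace ℝ (Fin d) =>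
        Real.exp (-(y idl)) * a (y i0)) x ≠ 0) :
    (∑ i : Fin d, fderiv ℝ (fun y : EuclideanSpace ℝ (Fin d) =>
        ‖gradient (fun z : EuclideanSpace ℝ (Fin d) =>
            Real.exp (-(z idl)) * a (z i0)) y‖ ^ (p - 2)
          * gradient (fun z : EuclideanSpace ℝ (Fin d) =>
            Real.exp (-(z idl)) * a (z i0)) y i)
        x (EuclideanSpace.single i 1)) = 0 := by
  have hgrad : ∀ y : EuclideanSpace ℝ (Fin d),
      gradient (fun z : EuclideanSpace ℝ (Fin d) => Real.exp (-(z idl)) * a (z i0)) y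
        = (Real.exp (-(y idl)) * deriv a (y i0)) • EuclideanSpace.single i0 (1:ℝ)
          - (Real.exp (-(y idl)) * a (y i0)) • EuclideanSpace.single idl (1:ℝ) :=
    fun y => (gv_grad i0 idl a ha y).gradient
  -- s ≠ 0 at the point
  have hs : (deriv a (x i0)) ^ 2 + (a (x i0)) ^ 2 ≠ 0 := by
    intro h
    apply hx
    rw [hgrad x]
    have h1 : deriv a (x i0) = 0 := by
      have := sq_nonneg (deriv a (x i0)); have := sq_nonneg (a (x i0))
      nlinarith
    have h2 : a (x i0) = 0 := by
      have := sq_nonneg (deriv a (x i0)); have := sq_nonneg (a (x i0))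
      nlinarith
    simp [h1, h2]
  set e1 : ℝ → ℝ := fun t => Real.exp (-((p - 1) * t)) with he1
  set w : ℝ → ℝ := fun t => ((deriv a t) ^ 2 + (a t) ^ 2) ^ ((p - 2) / 2) with hw
  have hF : ∀ i : Fin d, (fun y : EuclideanSpace ℝ (Fin d) =>
      ‖gradient (fun z : EuclideanSpace ℝ (Fin d) =>
          Real.exp (-(z idl)) * a (z i0)) y‖ ^ (p - 2)
        * gradient (fun z : EuclideanSpace ℝ (Fin d) =>
          Real.exp (-(z idl)) * a (z i0)) y i)
      = fun y : EuclideanSpace ℝ (Fin d) => e1 (y idl) * (w (y i0)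
          * ((if i = i0 then deriv a (y i0) else 0) - (if i = idl then a (y i0) else 0))) := by
    intro i
    funext y
    rw [hgrad y, gv_norm i0 idl hne, gv_apply]
    have hXeq : (if i = i0 then Real.exp (-(y idl)) * deriv a (y i0) else 0)
        - (if i = idl then Real.exp (-(y idl)) * a (y i0) else 0)
        = Real.exp (-(y idl)) * ((if i = i0 then deriv a (y i0) else 0)
            - (if i = idl then a (y i0) else 0)) := by
      split_ifs <;> ring
    rw [hXeq]
    have h1 : (Real.exp (-(y idl)) * deriv a (y i0)) ^ 2
        + (Real.exp (-(y idl)) * a (y i0)) ^ 2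
        = (Real.exp (-(y idl))) ^ 2 * ((deriv a (y i0)) ^ 2 + (a (y i0)) ^ 2) := by ring
    rw [h1, Real.sqrt_mul (by positivity), Real.sqrt_sq (le_of_lt (Real.exp_pos _)),
      Real.mul_rpow (le_of_lt (Real.exp_pos _)) (Real.sqrt_nonneg _),
      Real.sqrt_eq_rpow, ← Real.rpow_mul (by positivity), ← Real.exp_mul]
    have hq : 1 / 2 * (p - 2) = (p - 2) / 2 := by ring
    rw [hq]
    have hee : Real.exp (-(y idl) * (p - 2)) * Real.exp (-(y idl)) = e1 (y idl) := by
      rw [he1, ← Real.exp_add]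
      ring_nf
    linear_combination (((deriv a (y i0)) ^ 2 + (a (y i0)) ^ 2) ^ ((p - 2) / 2)
      * ((if i = i0 then deriv a (y i0) else 0) - (if i = idl then a (y i0) else 0))) * hee
  -- zero terms
  have hTzero : ∀ i : Fin d, i ≠ i0 → i ≠ idl →
      fderiv ℝ (fun y : EuclideanSpace ℝ (Fin d) =>
        ‖gradient (fun z : EuclideanSpace ℝ (Fin d) =>
            Real.exp (-(z idl)) * a (z i0)) y‖ ^ (p - 2)
          * gradient (fun z : EuclideanSpace ℝ (Fin d) =>
            Real.exp (-(z idl)) * a (z i0)) y i)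
        x (EuclideanSpace.single i 1) = 0 := by
    intro i h1 h2
    rw [hF i]
    have : (fun y : EuclideanSpace ℝ (Fin d) => e1 (y idl) * (w (y i0)
        * ((if i = i0 then deriv a (y i0) else 0) - (if i = idl then a (y i0) else 0))))
        = fun _ => (0:ℝ) := by
      funext y
      simp [h1, h2]
    rw [this]
    simp
  -- reduce sum to the two indices
  rw [show (∑ i : Fin d, fderiv ℝ (fun y : EuclideanSpace ℝ (Fin d) =>
        ‖gradient (fun z : EuclideanSpace ℝ (Fin d) =>
            Real.exp (-(z idl)) * a (z i0)) y‖ ^ (p - 2)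
          * gradient (fun z : EuclideanSpace ℝ (Fin d) =>
            Real.exp (-(z idl)) * a (z i0)) y i)
        x (EuclideanSpace.single i 1))
      = ∑ i ∈ ({i0, idl} : Finset (Fin d)), fderiv ℝ (fun y : EuclideanSpace ℝ (Fin d) =>
        ‖gradient (fun z : EuclideanSpace ℝ (Fin d) =>
            Real.exp (-(z idl)) * a (z i0)) y‖ ^ (p - 2)
          * gradient (fun z : EuclideanSpace ℝ (Fin d) =>
            Real.exp (-(z idl)) * a (z i0)) y i)
        x (EuclideanSpace.single i 1) from
    (Finset.sum_subset (Finset.subset_univ _) (by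
      intro i _ hi
      simp only [Finset.mem_insert, Finset.mem_singleton, not_or] at hi
      exact hTzero i hi.1 hi.2)).symm]
  rw [Finset.sum_pair hne]
  -- derivatives of the two components
  have hE1 : HasDerivAt e1 (-(p - 1) * e1 (x idl)) (x idl) := by
    have hlin : HasDerivAt (fun t : ℝ => -((p - 1) * t)) (-(p - 1)) (x idl) := by
      simpa [Pi.neg_def] using ((hasDerivAt_id (x idl)).const_mul (p - 1)).neg
    have h := (Real.hasDerivAt_exp (-((p - 1) * x idl))).comp (x idl) hlin
    rw [he1]
    convert h using 1
    · rfl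
    · rfl
    · rfl
    beta_reduce
    ring
  have hc : HasFDerivAt (𝕜 := ℝ) (fun y : EuclideanSpace ℝ (Fin d) => e1 (y idl))
      ((-(p - 1) * e1 (x idl)) • EuclideanSpace.proj idl) x := by
    simpa [Function.comp_def] using hE1.comp_hasFDerivAt x (proj_hasFDerivAt idl x)
  have hW1 : HasDerivAt (fun t => w t * deriv a t) (-((p - 1) * (w (x i0) * a (x i0)))) (x i0) :=
    key_hasDerivAt p hp1 a ha hODE (x i0) hs
  have hb1 : HasFDerivAt (𝕜 := ℝ) (fun y : EuclideanSpace ℝ (Fin d) => w (y i0) * deriv a (y i0))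
      ((-((p - 1) * (w (x i0) * a (x i0)))) • EuclideanSpace.proj i0) x := by
    simpa [Function.comp_def] using hW1.comp_hasFDerivAt x (proj_hasFDerivAt i0 x)
  obtain ⟨W2, hW2⟩ : ∃ W2, HasDerivAt (fun t => w t * a t) W2 (x i0) :=
    ⟨_, aux_hasDerivAt p a ha (x i0) hs a (deriv a (x i0))
      (((ha.differentiable (by norm_num)) (x i0)).hasDerivAt)⟩
  have hb2 : HasFDerivAt (𝕜 := ℝ) (fun y : EuclideanSpace ℝ (Fin d) => w (y i0) * a (y i0))
      (W2 • EuclideanSpace.proj i0) x := by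
    simpa [Function.comp_def] using hW2.comp_hasFDerivAt x (proj_hasFDerivAt i0 x)
  -- first term
  have hT0 : fderiv ℝ (fun y : EuclideanSpace ℝ (Fin d) =>
      ‖gradient (fun z : EuclideanSpace ℝ (Fin d) =>
          Real.exp (-(z idl)) * a (z i0)) y‖ ^ (p - 2)
        * gradient (fun z : EuclideanSpace ℝ (Fin d) =>
          Real.exp (-(z idl)) * a (z i0)) y i0)
      x (EuclideanSpace.single i0 1)
      = e1 (x idl) * -((p - 1) * (w (x i0) * a (x i0))) := by
    rw [hF i0]
    have heq : (fun y : EuclideanSpace ℝ (Fin d) => e1 (y idl) * (w (y i0)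
        * ((if i0 = i0 then deriv a (y i0) else 0) - (if i0 = idl then a (y i0) else 0))))
        = fun y : EuclideanSpace ℝ (Fin d) => e1 (y idl) * (w (y i0) * deriv a (y i0)) := by
      funext y
      simp [hne]
    rw [heq, (show HasFDerivAt (fun y : EuclideanSpace ℝ (Fin d) =>
      e1 (y idl) * (w (y i0) * deriv a (y i0))) _ x from hc.mul hb1).fderiv]
    simp [PiLp.proj_apply, EuclideanSpace.single_apply, hne, Ne.symm hne]
  have hTd : fderiv ℝ (fun y : EuclideanSpace ℝ (Fin d) =>
      ‖gradient (fun z : EuclideanSpace ℝ (Fin d) =>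
          Real.exp (-(z idl)) * a (z i0)) y‖ ^ (p - 2)
        * gradient (fun z : EuclideanSpace ℝ (Fin d) =>
          Real.exp (-(z idl)) * a (z i0)) y idl)
      x (EuclideanSpace.single idl 1)
      = (p - 1) * e1 (x idl) * (w (x i0) * a (x i0)) := by
    rw [hF idl]
    have heq : (fun y : EuclideanSpace ℝ (Fin d) => e1 (y idl) * (w (y i0)
        * ((if idl = i0 then deriv a (y i0) else 0) - (if idl = idl then a (y i0) else 0))))
        = fun y : EuclideanSpace ℝ (Fin d) => -(e1 (y idl) * (w (y i0) * a (y i0))) := by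
      funext y
      simp [Ne.symm hne]
    rw [heq, (show HasFDerivAt (fun y : EuclideanSpace ℝ (Fin d) =>
      -(e1 (y idl) * (w (y i0) * a (y i0)))) _ x from (hc.mul hb2).neg).fderiv]
    simp [PiLp.proj_apply, EuclideanSpace.single_apply, hne, Ne.symm hne]
    ring
  rw [hT0, hTd]
  ring

theorem wolff_solutions_p_harmonic (d : ℕ) (hd : 2 ≤ d) (p : ℝ) (hp1 : 1 < p)
    (a : ℝ → ℝ) (ha : ContDiff ℝ 2 a)
    (hnontriv : ∃ x : ℝ, (a x) ^ 2 + (deriv a x) ^ 2 ≠ 0)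
    (hODE : ∀ x : ℝ,
      deriv (deriv a) x
        + (((2 * p - 3) * (deriv a x) ^ 2 + (p - 1) * (a x) ^ 2)
            / ((p - 1) * (deriv a x) ^ 2 + (a x) ^ 2)) * a x = 0) :
    ∀ x : EuclideanSpace ℝ (Fin d),
      gradient (fun y : EuclideanSpace ℝ (Fin d) =>
          Real.exp (-(y ⟨d - 1, by omega⟩)) * a (y ⟨0, by omega⟩)) x ≠ 0 →
      (∑ i : Fin d, fderiv ℝ (fun y : EuclideanSpace ℝ (Fin d) =>
          ‖gradient (fun z : EuclideanSpace ℝ (Fin d) =>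
              Real.exp (-(z ⟨d - 1, by omega⟩)) * a (z ⟨0, by omega⟩)) y‖ ^ (p - 2)
            * gradient (fun z : EuclideanSpace ℝ (Fin d) =>
              Real.exp (-(z ⟨d - 1, by omega⟩)) * a (z ⟨0, by omega⟩)) y i)
          x (EuclideanSpace.single i 1)) = 0 := by
  intro x hx
  have hne : (⟨0, by omega⟩ : Fin d) ≠ ⟨d - 1, by omega⟩ := by
    simp only [ne_eq, Fin.mk.injEq]
    omega
  exact main_aux d p hp1 a ha hODE ⟨0, by omega⟩ ⟨d - 1, by omega⟩ hne x hx
end
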